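/- Let n ≥ 2 and m ≥ 1 be natural numbers, let pos, neg : Fin m → Finset (Fin n) satisfy pos j ∩ neg j = ∅ for every j, set r' = ⌈log₂ n⌉, and let t ≥ 1 be a natural number with 10^t > 2^{r'+1}. Index weights by ι = (Fin n ⊕ Fin n) ⊕ (Fin m × Fin r') and define w : ι → ℕ by: a_i = w(inl(inl i)) = 10^{t(m+1)+(i+1)} + Σ_{j : i ∈ pos j} 10^{t(j+1)}; b_i = w(inl(inr i)) = 10^{t(m+1)+(i+1)} + Σ_{j : i ∈ neg j} 10^{t(j+1)}; and w(inr(j,s)) = 2^s · 10^{t(j+1)}. Define q' = Σ_{i ∈ Fin n} 10^{t(m+1)+(i+1)} + 2^{r'} · Σ_{j ∈ Fin m} 10^{t(j+1)}. Then every finite set S ⊆ ι with Σ_{x ∈ S} w(x) = q' contains, for each i ∈ Fin n, exactly one of the two indices inl(inl i) and inl(inr i); that is, it selects exactly one of a_i and b_i for every variable i. -/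

import Mathlib

theorem aux_sum_lt (x : ℕ) (hx : 2 ≤ x) (d : ℕ → ℕ) (hd : ∀ i, d i < x) :
    ∀ n, ∑ i ∈ Finset.range n, d i * x ^ i < x ^ n := by
  intro n
  induction n with
  | zero => simpa using Nat.one_pos
  | succ n ih =>
    rw [Finset.sum_range_succ]
    have h1 : ∑ i ∈ Finset.range n, d i * x ^ i + d n * x ^ n < x ^ n + d n * x ^ n := by
      omega
    calc ∑ i ∈ Finset.range n, d i * x ^ i + d n * x ^ n
        < x ^ n + d n * x ^ n := h1
      _ = (1 + d n) * x ^ n := by ring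
      _ ≤ x * x ^ n := Nat.mul_le_mul_right _ (by have := hd n; omega)
      _ = x ^ (n + 1) := by ring

theorem aux_digits (x : ℕ) (hx : 2 ≤ x) (d : ℕ → ℕ) (hd : ∀ i, d i < x) :
    ∀ n, (∑ i ∈ Finset.range n, d i * x ^ i = ∑ i ∈ Finset.range n, x ^ i) →
      ∀ i, i < n → d i = 1 := by
  intro n
  induction n with
  | zero => intro _ i hi; omega
  | succ n ih =>
    intro h i hi
    rw [Finset.sum_range_succ, Finset.sum_range_succ] at h
    have hP : 0 < x ^ n := Nat.pow_pos (n := n) (by omega)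
    have hA : ∑ i ∈ Finset.range n, d i * x ^ i < x ^ n := aux_sum_lt x hx d hd n
    have hB : ∑ i ∈ Finset.range n, x ^ i < x ^ n := by
      have := aux_sum_lt x hx (fun _ => 1) (fun _ => lt_of_lt_of_le one_lt_two hx) n
      simpa using this
    have h' : ∑ i ∈ Finset.range n, d i * x ^ i + d n * x ^ n
        = ∑ i ∈ Finset.range n, x ^ i + 1 * x ^ n := by rw [one_mul]; exact h
    have e1 := Nat.add_mul_div_right (∑ i ∈ Finset.range n, d i * x ^ i) (d n) hP
    have e2 := Nat.add_mul_div_right (∑ i ∈ Finset.range n, x ^ i) 1 hP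
    rw [Nat.div_eq_of_lt hA] at e1
    rw [Nat.div_eq_of_lt hB] at e2
    rw [h'] at e1
    have hdn : d n = 1 := by omega
    rcases Nat.lt_succ_iff_lt_or_eq.mp hi with h2 | h2
    · apply ih _ _ h2
      rw [hdn, one_mul] at h
      omega
    · rw [h2]; exact hdn

theorem aux_geom_lt (x c : ℕ) (hc : c < x) :
    ∀ m, c * ∑ j ∈ Finset.range m, x ^ (j + 1) < x ^ (m + 1) := by
  intro m
  induction m with
  | zero => simpa using Nat.pow_pos (n := 1) (by omega)
  | succ m ih =>
    rw [Finset.sum_range_succ, Nat.mul_add]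
    calc c * ∑ j ∈ Finset.range m, x ^ (j + 1) + c * x ^ (m + 1)
        < x ^ (m + 1) + c * x ^ (m + 1) := by omega
      _ = (1 + c) * x ^ (m + 1) := by ring
      _ ≤ x * x ^ (m + 1) := Nat.mul_le_mul_right _ (by omega)
      _ = x ^ (m + 1 + 1) := by ring

theorem aux_cancel (Bv L1 L2 H K : ℕ) (hB : 0 < Bv) (h1 : L1 < Bv) (h2 : L2 < Bv)
    (h : L1 + H * Bv = L2 + K * Bv) : H = K := by
  have e1 := Nat.add_mul_div_right L1 H hB
  have e2 := Nat.add_mul_div_right L2 K hB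
  rw [Nat.div_eq_of_lt h1] at e1
  rw [Nat.div_eq_of_lt h2] at e2
  rw [h] at e1
  omega

theorem subset_sum_solution_selects_one_of_each_pair
    (n m t : ℕ) (hn : 2 ≤ n) (hm : 1 ≤ m) (ht : 1 ≤ t)
    (pos neg : Fin m → Finset (Fin n)) (hdisj : ∀ j, pos j ∩ neg j = ∅)
    (r' : ℕ) (hr' : r' = Nat.clog 2 n) (ht10 : 2 ^ (r' + 1) < 10 ^ t)
    (w : (Fin n ⊕ Fin n) ⊕ (Fin m × Fin r') → ℕ)
    (hwa : ∀ i : Fin n, w (Sum.inl (Sum.inl i)) =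
        10 ^ (t * (m + 1) + ((i : ℕ) + 1)) +
          ∑ j ∈ Finset.univ.filter fun j : Fin m => i ∈ pos j, 10 ^ (t * ((j : ℕ) + 1)))
    (hwb : ∀ i : Fin n, w (Sum.inl (Sum.inr i)) =
        10 ^ (t * (m + 1) + ((i : ℕ) + 1)) +
          ∑ j ∈ Finset.univ.filter fun j : Fin m => i ∈ neg j, 10 ^ (t * ((j : ℕ) + 1)))
    (hwc : ∀ j : Fin m, ∀ s : Fin r', w (Sum.inr (j, s)) =
        2 ^ (s : ℕ) * 10 ^ (t * ((j : ℕ) + 1)))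
    (q' : ℕ)
    (hq' : q' = (∑ i : Fin n, 10 ^ (t * (m + 1) + ((i : ℕ) + 1))) +
        2 ^ r' * ∑ j : Fin m, 10 ^ (t * ((j : ℕ) + 1))) :
    ∀ S : Finset ((Fin n ⊕ Fin n) ⊕ (Fin m × Fin r')), (∑ x ∈ S, w x = q') →
      ∀ i : Fin n,
        (Sum.inl (Sum.inl i) ∈ S ∧ Sum.inl (Sum.inr i) ∉ S) ∨
        (Sum.inl (Sum.inl i) ∉ S ∧ Sum.inl (Sum.inr i) ∈ S) := by
  intro S hS i0
  classical
  -- abbreviations (written out explicitly)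
  set d' : ℕ → ℕ := fun k =>
    if h : k < n then
      (if Sum.inl (Sum.inl (⟨k, h⟩ : Fin n)) ∈ S then 1 else 0) +
      (if Sum.inl (Sum.inr (⟨k, h⟩ : Fin n)) ∈ S then 1 else 0)
    else 0 with hd'def
  have hd'lt : ∀ k, d' k < 10 := by
    intro k
    simp only [hd'def]
    split
    · split <;> split <;> omega
    · omega
  -- Step 1: decompose the sum over S
  have h0 : ∑ x ∈ S, w x = ∑ x : (Fin n ⊕ Fin n) ⊕ (Fin m × Fin r'),
      (if x ∈ S then w x else 0) := by
    rw [Finset.sum_ite_mem, Finset.univ_inter]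
  have key : ∑ x ∈ S, w x =
      10 ^ (t * (m + 1)) *
        (∑ i : Fin n, ((if Sum.inl (Sum.inl i) ∈ S then 1 else 0) +
            (if Sum.inl (Sum.inr i) ∈ S then 1 else 0)) * 10 ^ ((i : ℕ) + 1))
      + ((∑ i : Fin n, (if Sum.inl (Sum.inl i) ∈ S then 1 else 0) *
            ∑ j ∈ Finset.univ.filter fun j : Fin m => i ∈ pos j, 10 ^ (t * ((j : ℕ) + 1)))
        + (∑ i : Fin n, (if Sum.inl (Sum.inr i) ∈ S then 1 else 0) *
            ∑ j ∈ Finset.univ.filter fun j : Fin m => i ∈ neg j, 10 ^ (t * ((j : ℕ) + 1)))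
        + (∑ p : Fin m × Fin r', (if Sum.inr p ∈ S then 1 else 0) *
            (2 ^ ((p.2 : ℕ)) * 10 ^ (t * ((p.1 : ℕ) + 1))))) := by
    rw [h0, Fintype.sum_sum_type, Fintype.sum_sum_type]
    have hSA : ∑ i : Fin n, (if Sum.inl (Sum.inl i) ∈ S then w (Sum.inl (Sum.inl i)) else 0)
        = 10 ^ (t * (m + 1)) * (∑ i : Fin n, (if Sum.inl (Sum.inl i) ∈ S then 1 else 0) * 10 ^ ((i : ℕ) + 1))
          + ∑ i : Fin n, (if Sum.inl (Sum.inl i) ∈ S then 1 else 0) *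
              ∑ j ∈ Finset.univ.filter fun j : Fin m => i ∈ pos j, 10 ^ (t * ((j : ℕ) + 1)) := by
      rw [Finset.mul_sum, ← Finset.sum_add_distrib]
      refine Finset.sum_congr rfl fun i _ => ?_
      rw [hwa i, pow_add]
      by_cases hc : Sum.inl (Sum.inl i) ∈ S <;> simp [hc]
    have hSB : ∑ i : Fin n, (if Sum.inl (Sum.inr i) ∈ S then w (Sum.inl (Sum.inr i)) else 0)
        = 10 ^ (t * (m + 1)) * (∑ i : Fin n, (if Sum.inl (Sum.inr i) ∈ S then 1 else 0) * 10 ^ ((i : ℕ) + 1))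
          + ∑ i : Fin n, (if Sum.inl (Sum.inr i) ∈ S then 1 else 0) *
              ∑ j ∈ Finset.univ.filter fun j : Fin m => i ∈ neg j, 10 ^ (t * ((j : ℕ) + 1)) := by
      rw [Finset.mul_sum, ← Finset.sum_add_distrib]
      refine Finset.sum_congr rfl fun i _ => ?_
      rw [hwb i, pow_add]
      by_cases hc : Sum.inl (Sum.inr i) ∈ S <;> simp [hc]
    have hSC : ∑ p : Fin m × Fin r', (if Sum.inr p ∈ S then w (Sum.inr p) else 0)
        = ∑ p : Fin m × Fin r', (if Sum.inr p ∈ S then 1 else 0) *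
            (2 ^ ((p.2 : ℕ)) * 10 ^ (t * ((p.1 : ℕ) + 1))) := by
      refine Finset.sum_congr rfl fun p _ => ?_
      rw [show w (Sum.inr p) = 2 ^ ((p.2 : ℕ)) * 10 ^ (t * ((p.1 : ℕ) + 1)) from hwc p.1 p.2]
      by_cases hc : Sum.inr p ∈ S <;> simp [hc]
    rw [hSA, hSB, hSC]
    have hsplit : ∑ i : Fin n, ((if Sum.inl (Sum.inl i) ∈ S then 1 else 0) +
          (if Sum.inl (Sum.inr i) ∈ S then 1 else 0)) * 10 ^ ((i : ℕ) + 1)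
        = (∑ i : Fin n, (if Sum.inl (Sum.inl i) ∈ S then 1 else 0) * 10 ^ ((i : ℕ) + 1))
          + ∑ i : Fin n, (if Sum.inl (Sum.inr i) ∈ S then 1 else 0) * 10 ^ ((i : ℕ) + 1) := by
      rw [← Finset.sum_add_distrib]
      exact Finset.sum_congr rfl fun i _ => by ring
    rw [hsplit, Nat.mul_add]
    ring
  -- Step 2: the target value
  have hq2 : q' = 10 ^ (t * (m + 1)) * (∑ i : Fin n, 10 ^ ((i : ℕ) + 1))
      + 2 ^ r' * ∑ j : Fin m, 10 ^ (t * ((j : ℕ) + 1)) := by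
    rw [hq']
    congr 1
    rw [Finset.mul_sum]
    exact Finset.sum_congr rfl fun i _ => pow_add 10 _ _
  -- Step 3: bounds on the low parts
  have hTr : (∑ j : Fin m, 10 ^ (t * ((j : ℕ) + 1)))
      = ∑ j ∈ Finset.range m, (10 ^ t) ^ (j + 1) := by
    rw [← Fin.sum_univ_eq_sum_range (fun j => (10 ^ t) ^ (j + 1)) m]
    exact Finset.sum_congr rfl fun j _ => by rw [← pow_mul]
  have hBT : (10 : ℕ) ^ (t * (m + 1)) = (10 ^ t) ^ (m + 1) := pow_mul 10 t (m + 1)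
  have hn2 : n ≤ 2 ^ r' := by
    rw [hr']
    exact Nat.le_pow_clog one_lt_two n
  have h2succ : 2 ^ (r' + 1) = 2 * 2 ^ r' := by ring
  have hc1 : n + (2 ^ r' - 1) < 10 ^ t := by omega
  have hc2 : 2 ^ r' < 10 ^ t := by
    have : 0 < 2 ^ r' := Nat.pow_pos (by omega)
    omega
  -- per-variable clause-sum bound using disjointness
  have hPN : ∀ i : Fin n,
      (∑ j ∈ Finset.univ.filter fun j : Fin m => i ∈ pos j, 10 ^ (t * ((j : ℕ) + 1)))
      + (∑ j ∈ Finset.univ.filter fun j : Fin m => i ∈ neg j, 10 ^ (t * ((j : ℕ) + 1)))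
      ≤ ∑ j : Fin m, 10 ^ (t * ((j : ℕ) + 1)) := by
    intro i
    have hdisj2 : Disjoint (Finset.univ.filter fun j : Fin m => i ∈ pos j)
        (Finset.univ.filter fun j : Fin m => i ∈ neg j) := by
      rw [Finset.disjoint_left]
      intro j hj1 hj2
      simp only [Finset.mem_filter] at hj1 hj2
      have hij : i ∈ pos j ∩ neg j := Finset.mem_inter.mpr ⟨hj1.2, hj2.2⟩
      rw [hdisj j] at hij
      exact absurd hij (Finset.notMem_empty i)
    rw [← Finset.sum_union hdisj2]
    exact Finset.sum_le_sum_of_subset (Finset.subset_univ _)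
  have hLab : (∑ i : Fin n, (if Sum.inl (Sum.inl i) ∈ S then 1 else 0) *
        ∑ j ∈ Finset.univ.filter fun j : Fin m => i ∈ pos j, 10 ^ (t * ((j : ℕ) + 1)))
      + (∑ i : Fin n, (if Sum.inl (Sum.inr i) ∈ S then 1 else 0) *
        ∑ j ∈ Finset.univ.filter fun j : Fin m => i ∈ neg j, 10 ^ (t * ((j : ℕ) + 1)))
      ≤ n * ∑ j : Fin m, 10 ^ (t * ((j : ℕ) + 1)) := by
    rw [← Finset.sum_add_distrib]
    calc ∑ i : Fin n, ((if Sum.inl (Sum.inl i) ∈ S then 1 else 0) *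
          (∑ j ∈ Finset.univ.filter fun j : Fin m => i ∈ pos j, 10 ^ (t * ((j : ℕ) + 1)))
        + (if Sum.inl (Sum.inr i) ∈ S then 1 else 0) *
          ∑ j ∈ Finset.univ.filter fun j : Fin m => i ∈ neg j, 10 ^ (t * ((j : ℕ) + 1)))
        ≤ ∑ _i : Fin n, ∑ j : Fin m, 10 ^ (t * ((j : ℕ) + 1)) := by
          refine Finset.sum_le_sum fun i _ => ?_
          have h1 : (if Sum.inl (Sum.inl i) ∈ S then 1 else 0) *
              (∑ j ∈ Finset.univ.filter fun j : Fin m => i ∈ pos j, 10 ^ (t * ((j : ℕ) + 1)))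
              ≤ ∑ j ∈ Finset.univ.filter fun j : Fin m => i ∈ pos j, 10 ^ (t * ((j : ℕ) + 1)) := by
            split <;> simp
          have h2 : (if Sum.inl (Sum.inr i) ∈ S then 1 else 0) *
              (∑ j ∈ Finset.univ.filter fun j : Fin m => i ∈ neg j, 10 ^ (t * ((j : ℕ) + 1)))
              ≤ ∑ j ∈ Finset.univ.filter fun j : Fin m => i ∈ neg j, 10 ^ (t * ((j : ℕ) + 1)) := by
            split <;> simp
          exact le_trans (Nat.add_le_add h1 h2) (hPN i)
      _ = n * ∑ j : Fin m, 10 ^ (t * ((j : ℕ) + 1)) := by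
          rw [Finset.sum_const, Finset.card_univ, Fintype.card_fin, smul_eq_mul]
  have hgeo : (∑ s : Fin r', 2 ^ ((s : ℕ))) ≤ 2 ^ r' - 1 := by
    have h1 : (∑ s : Fin r', 2 ^ ((s : ℕ))) = ∑ s ∈ Finset.range r', 2 ^ s :=
      Fin.sum_univ_eq_sum_range (fun s => 2 ^ s) r'
    have h2 := aux_sum_lt 2 le_rfl (fun _ => 1) (fun _ => one_lt_two) r'
    simp only [one_mul] at h2
    have h3 : 0 < 2 ^ r' := Nat.pow_pos (by omega)
    omega
  have hLc : (∑ p : Fin m × Fin r', (if Sum.inr p ∈ S then 1 else 0) *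
        (2 ^ ((p.2 : ℕ)) * 10 ^ (t * ((p.1 : ℕ) + 1))))
      ≤ (2 ^ r' - 1) * ∑ j : Fin m, 10 ^ (t * ((j : ℕ) + 1)) := by
    calc ∑ p : Fin m × Fin r', (if Sum.inr p ∈ S then 1 else 0) *
          (2 ^ ((p.2 : ℕ)) * 10 ^ (t * ((p.1 : ℕ) + 1)))
        ≤ ∑ p : Fin m × Fin r', 2 ^ ((p.2 : ℕ)) * 10 ^ (t * ((p.1 : ℕ) + 1)) := by
          refine Finset.sum_le_sum fun p _ => ?_
          split <;> simp
      _ = (∑ s : Fin r', 2 ^ ((s : ℕ))) * ∑ j : Fin m, 10 ^ (t * ((j : ℕ) + 1)) := by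
          rw [Fintype.sum_prod_type, Finset.sum_comm, Finset.sum_mul]
          refine Finset.sum_congr rfl fun s _ => ?_
          rw [Finset.mul_sum]
      _ ≤ (2 ^ r' - 1) * ∑ j : Fin m, 10 ^ (t * ((j : ℕ) + 1)) :=
          Nat.mul_le_mul_right _ hgeo
  -- total low-part bound
  have hLlt : (∑ i : Fin n, (if Sum.inl (Sum.inl i) ∈ S then 1 else 0) *
        ∑ j ∈ Finset.univ.filter fun j : Fin m => i ∈ pos j, 10 ^ (t * ((j : ℕ) + 1)))
      + (∑ i : Fin n, (if Sum.inl (Sum.inr i) ∈ S then 1 else 0) *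
        ∑ j ∈ Finset.univ.filter fun j : Fin m => i ∈ neg j, 10 ^ (t * ((j : ℕ) + 1)))
      + (∑ p : Fin m × Fin r', (if Sum.inr p ∈ S then 1 else 0) *
        (2 ^ ((p.2 : ℕ)) * 10 ^ (t * ((p.1 : ℕ) + 1))))
      < 10 ^ (t * (m + 1)) := by
    have hsum_le := Nat.add_le_add hLab hLc
    rw [← Nat.add_mul] at hsum_le
    have hlt := aux_geom_lt (10 ^ t) (n + (2 ^ r' - 1)) hc1 m
    rw [← hTr, ← hBT] at hlt
    exact lt_of_le_of_lt hsum_le hlt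
  have hLqlt : 2 ^ r' * (∑ j : Fin m, 10 ^ (t * ((j : ℕ) + 1))) < 10 ^ (t * (m + 1)) := by
    have hlt := aux_geom_lt (10 ^ t) (2 ^ r') hc2 m
    rw [← hTr, ← hBT] at hlt
    exact hlt
  -- Step 4: conclude high parts equal
  have hBpos : 0 < 10 ^ (t * (m + 1)) := Nat.pow_pos (by omega)
  have hHK : (∑ i : Fin n, ((if Sum.inl (Sum.inl i) ∈ S then 1 else 0) +
        (if Sum.inl (Sum.inr i) ∈ S then 1 else 0)) * 10 ^ ((i : ℕ) + 1))
      = ∑ i : Fin n, 10 ^ ((i : ℕ) + 1) := by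
    refine aux_cancel (10 ^ (t * (m + 1))) _ _ _ _ hBpos hLlt hLqlt ?_
    rw [Nat.mul_comm _ (10 ^ (t * (m + 1))), Nat.mul_comm _ (10 ^ (t * (m + 1)))]
    omega
  -- Step 5: digits argument
  have hHrange : ∑ i : Fin n, ((if Sum.inl (Sum.inl i) ∈ S then 1 else 0) +
        (if Sum.inl (Sum.inr i) ∈ S then 1 else 0)) * 10 ^ ((i : ℕ) + 1)
      = ∑ k ∈ Finset.range n, d' k * 10 ^ (k + 1) := by
    rw [← Fin.sum_univ_eq_sum_range (fun k => d' k * 10 ^ (k + 1)) n]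
    refine Finset.sum_congr rfl fun i _ => ?_
    simp only [hd'def]
    rw [dif_pos i.isLt]
  have hKrange : (∑ i : Fin n, 10 ^ ((i : ℕ) + 1)) = ∑ k ∈ Finset.range n, 10 ^ (k + 1) :=
    Fin.sum_univ_eq_sum_range (fun k => 10 ^ (k + 1)) n
  have l1 : ∑ k ∈ Finset.range n, d' k * 10 ^ (k + 1)
      = 10 * ∑ k ∈ Finset.range n, d' k * 10 ^ k := by
    rw [Finset.mul_sum]
    exact Finset.sum_congr rfl fun k _ => by ring
  have l2 : ∑ k ∈ Finset.range n, (10 : ℕ) ^ (k + 1)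
      = 10 * ∑ k ∈ Finset.range n, (10 : ℕ) ^ k := by
    rw [Finset.mul_sum]
    exact Finset.sum_congr rfl fun k _ => by ring
  have l3 : ∑ k ∈ Finset.range n, d' k * 10 ^ k = ∑ k ∈ Finset.range n, (10 : ℕ) ^ k := by
    rw [hHrange, hKrange] at hHK
    rw [l1, l2] at hHK
    omega
  have hd1 := aux_digits 10 (by norm_num) d' hd'lt n l3 (i0 : ℕ) i0.isLt
  simp only [hd'def] at hd1
  rw [dif_pos i0.isLt] at hd1
  simp only [Fin.eta] at hd1
  by_cases h1 : Sum.inl (Sum.inl i0) ∈ S <;> by_cases h2 : Sum.inl (Sum.inr i0) ∈ S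
  · exfalso; rw [if_pos h1, if_pos h2] at hd1; omega
  · exact Or.inl ⟨h1, h2⟩
  · exact Or.inr ⟨h1, h2⟩
  · exfalso; rw [if_neg h1, if_neg h2] at hd1; omega
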